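/- Let W, H > 0, K ∈ ℕ, real coefficients a_{up} (0 ≤ u, p ≤ K) with a_{00} = 0, and ψ(z,v) = Σ_{u=0}^{K} Σ_{p=0}^{K} a_{up} cos(uπz/W) cos(pπv/H). Fix x_i ∈ ℝ, w_i > 0, A_i > 0 and h_i = A_i/w_i, and define g(y) = ∬_{[x_i − w_i/2, x_i + w_i/2] × [y − h_i/2, y + h_i/2]} ψ(z,v) dz dv. Then g is differentiable in y with derivative g′(y_i) = Σ_{u=1}^{K} Σ_{p=1}^{K} a_{up} (W/(uπ)) [sin(uπ(x_i + w_i/2)/W) − sin(uπ(x_i − w_i/2)/W)] [cos(pπ(y_i + h_i/2)/H) − cos(pπ(y_i − h_i/2)/H)] + Σ_{p=1}^{K} a_{0p} w_i [cos(pπ(y_i + h_i/2)/H) − cos(pπ(y_i − h_i/2)/H)]. -/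

import Mathlib

open MeasureTheory Real

lemma integral_cos_div (c d : ℝ) (hc : c ≠ 0) (hd : d ≠ 0) (a b : ℝ) :
    ∫ x in a..b, Real.cos (c * x / d)
      = Real.sin (c * b / d) * (d / c) - Real.sin (c * a / d) * (d / c) := by
  apply intervalIntegral.integral_eq_sub_of_hasDerivAt
  · intro x _
    have h1 : HasDerivAt (fun t : ℝ => c * t / d) (c / d) x := by
      simpa using ((hasDerivAt_id x).const_mul c).div_const d
    have h2 := ((Real.hasDerivAt_sin (c * x / d)).comp x h1).mul_const (d / c)
    refine h2.congr_deriv (Eq.symm ?_)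
    field_simp
  · exact (Real.continuous_cos.comp (by fun_prop)).intervalIntegrable _ _

lemma sum_range_split (K : ℕ) (f : ℕ → ℝ) :
    ∑ i ∈ Finset.range (K + 1), f i = f 0 + ∑ i ∈ Finset.Icc 1 K, f i := by
  have h : Finset.range (K + 1) = insert 0 (Finset.Icc 1 K) := by
    ext x; simp [Nat.lt_succ_iff]; omega
  rw [h, Finset.sum_insert (by simp)]


/-- the potential energy is differentiable in the ordinate `y_i` of the
module's center, with the stated closed-form derivative. -/
theorem hasDerivAt_potential_energy_y
    (W H : ℝ) (hW : 0 < W) (hH : 0 < H) (K : ℕ) (a : ℕ → ℕ → ℝ) (ha00 : a 0 0 = 0)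
    (xi wi Ai : ℝ) (hwi : 0 < wi) (hAi : 0 < Ai) (yi : ℝ) :
    HasDerivAt
      (fun y : ℝ =>
        ∫ z in (xi - wi / 2)..(xi + wi / 2), ∫ v in (y - (Ai / wi) / 2)..(y + (Ai / wi) / 2),
          ∑ u ∈ Finset.range (K + 1), ∑ p ∈ Finset.range (K + 1),
            a u p * Real.cos ((u : ℝ) * π * z / W) * Real.cos ((p : ℝ) * π * v / H))
      ((∑ u ∈ Finset.Icc 1 K, ∑ p ∈ Finset.Icc 1 K,
          a u p * (W / ((u : ℝ) * π)) *
            (Real.sin ((u : ℝ) * π * (xi + wi / 2) / W) -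
              Real.sin ((u : ℝ) * π * (xi - wi / 2) / W)) *
            (Real.cos ((p : ℝ) * π * (yi + (Ai / wi) / 2) / H) -
              Real.cos ((p : ℝ) * π * (yi - (Ai / wi) / 2) / H)))
        + (∑ p ∈ Finset.Icc 1 K,
            a 0 p * wi *
              (Real.cos ((p : ℝ) * π * (yi + (Ai / wi) / 2) / H) -
                Real.cos ((p : ℝ) * π * (yi - (Ai / wi) / 2) / H))))
      yi := by
  -- Step A: rewrite the double integral as a finite sum of products
  have hfun : (fun y : ℝ =>
        ∫ z in (xi - wi / 2)..(xi + wi / 2), ∫ v in (y - (Ai / wi) / 2)..(y + (Ai / wi) / 2),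
          ∑ u ∈ Finset.range (K + 1), ∑ p ∈ Finset.range (K + 1),
            a u p * Real.cos ((u : ℝ) * π * z / W) * Real.cos ((p : ℝ) * π * v / H))
      = (fun y : ℝ =>
        ∑ u ∈ Finset.range (K + 1), ∑ p ∈ Finset.range (K + 1),
          (a u p * ∫ z in (xi - wi / 2)..(xi + wi / 2), Real.cos ((u : ℝ) * π * z / W)) *
            ∫ v in (y - (Ai / wi) / 2)..(y + (Ai / wi) / 2), Real.cos ((p : ℝ) * π * v / H)) := by
    funext y
    have inner : ∀ z : ℝ,
        (∫ v in (y - (Ai / wi) / 2)..(y + (Ai / wi) / 2),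
          ∑ u ∈ Finset.range (K + 1), ∑ p ∈ Finset.range (K + 1),
            a u p * Real.cos ((u : ℝ) * π * z / W) * Real.cos ((p : ℝ) * π * v / H))
        = ∑ u ∈ Finset.range (K + 1), ∑ p ∈ Finset.range (K + 1),
            (a u p * Real.cos ((u : ℝ) * π * z / W)) *
              ∫ v in (y - (Ai / wi) / 2)..(y + (Ai / wi) / 2), Real.cos ((p : ℝ) * π * v / H) := by
      intro z
      rw [intervalIntegral.integral_finset_sum]
      · refine Finset.sum_congr rfl fun u _ => ?_
        rw [intervalIntegral.integral_finset_sum]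
        · exact Finset.sum_congr rfl fun p _ => intervalIntegral.integral_const_mul _ _
        · intro p _
          exact (Continuous.intervalIntegrable (by fun_prop)) _ _
      · intro u _
        apply Continuous.intervalIntegrable
        exact continuous_finset_sum _ fun p _ => by fun_prop
    simp_rw [inner]
    rw [intervalIntegral.integral_finset_sum]
    · refine Finset.sum_congr rfl fun u _ => ?_
      rw [intervalIntegral.integral_finset_sum]
      · refine Finset.sum_congr rfl fun p _ => ?_
        rw [intervalIntegral.integral_mul_const, intervalIntegral.integral_const_mul]
      · intro p _
        exact (Continuous.intervalIntegrable (by fun_prop)) _ _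
    · intro u _
      apply Continuous.intervalIntegrable
      exact continuous_finset_sum _ fun p _ => by fun_prop
  rw [hfun]
  -- Step B: differentiate each inner integral in y
  have hG : ∀ p : ℕ, HasDerivAt
      (fun y : ℝ => ∫ v in (y - (Ai / wi) / 2)..(y + (Ai / wi) / 2),
        Real.cos ((p : ℝ) * π * v / H))
      (Real.cos ((p : ℝ) * π * (yi + (Ai / wi) / 2) / H) -
        Real.cos ((p : ℝ) * π * (yi - (Ai / wi) / 2) / H)) yi := by
    intro p
    rcases Nat.eq_zero_or_pos p with hp | hp
    · subst hp
      have e1 : (fun y : ℝ => ∫ v in (y - (Ai / wi) / 2)..(y + (Ai / wi) / 2),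
          Real.cos ((↑(0:ℕ) : ℝ) * π * v / H)) = fun y : ℝ => (y + (Ai / wi) / 2) - (y - (Ai / wi) / 2) := by
        funext y; simp
      rw [e1]
      have e2 : Real.cos ((↑(0:ℕ) : ℝ) * π * (yi + (Ai / wi) / 2) / H) -
          Real.cos ((↑(0:ℕ) : ℝ) * π * (yi - (Ai / wi) / 2) / H) = (1:ℝ) - 1 := by norm_num
      rw [e2]
      exact ((hasDerivAt_id yi).add_const ((Ai / wi) / 2)).sub
        ((hasDerivAt_id yi).sub_const ((Ai / wi) / 2))
    · have hc : ((p : ℝ) * π) ≠ 0 :=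
        mul_ne_zero (by exact_mod_cast hp.ne') Real.pi_ne_zero
      have hclosed : (fun y : ℝ => ∫ v in (y - (Ai / wi) / 2)..(y + (Ai / wi) / 2),
          Real.cos ((p : ℝ) * π * v / H))
          = fun y : ℝ => Real.sin ((p : ℝ) * π * (y + (Ai / wi) / 2) / H) * (H / ((p : ℝ) * π))
            - Real.sin ((p : ℝ) * π * (y - (Ai / wi) / 2) / H) * (H / ((p : ℝ) * π)) := by
        funext y
        exact integral_cos_div ((p : ℝ) * π) H hc hH.ne' _ _
      rw [hclosed]
      have hin1 : HasDerivAt (fun y : ℝ => (p : ℝ) * π * (y + (Ai / wi) / 2) / H)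
          ((p : ℝ) * π / H) yi := by
        simpa using (((hasDerivAt_id yi).add_const ((Ai / wi) / 2)).const_mul ((p : ℝ) * π)).div_const H
      have hin2 : HasDerivAt (fun y : ℝ => (p : ℝ) * π * (y - (Ai / wi) / 2) / H)
          ((p : ℝ) * π / H) yi := by
        simpa using (((hasDerivAt_id yi).sub_const ((Ai / wi) / 2)).const_mul ((p : ℝ) * π)).div_const H
      have hs1 := ((Real.hasDerivAt_sin ((p : ℝ) * π * (yi + (Ai / wi) / 2) / H)).comp yi hin1).mul_const (H / ((p : ℝ) * π))
      have hs2 := ((Real.hasDerivAt_sin ((p : ℝ) * π * (yi - (Ai / wi) / 2) / H)).comp yi hin2).mul_const (H / ((p : ℝ) * π))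
      refine (hs1.sub hs2).congr_deriv (Eq.symm ?_)
      field_simp
  have hSum := HasDerivAt.fun_sum
    (fun u (_ : u ∈ Finset.range (K + 1)) => HasDerivAt.fun_sum
      (fun p (_ : p ∈ Finset.range (K + 1)) => (hG p).const_mul
        (a u p * ∫ z in (xi - wi / 2)..(xi + wi / 2), Real.cos ((u : ℝ) * π * z / W))))
  refine hSum.congr_deriv (Eq.symm ?_)
  -- value equality
  have hIz0 : (∫ z in (xi - wi / 2)..(xi + wi / 2), Real.cos ((↑(0:ℕ) : ℝ) * π * z / W)) = wi := by
    simp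
  have hD0 : Real.cos ((↑(0:ℕ) : ℝ) * π * (yi + (Ai / wi) / 2) / H) -
      Real.cos ((↑(0:ℕ) : ℝ) * π * (yi - (Ai / wi) / 2) / H) = 0 := by norm_num
  rw [sum_range_split]
  rw [sum_range_split]
  simp only [hD0, hIz0, mul_zero, zero_add]
  have hrest : ∀ u ∈ Finset.Icc 1 K,
      (∑ p ∈ Finset.range (K + 1),
        (a u p * ∫ z in (xi - wi / 2)..(xi + wi / 2), Real.cos ((u : ℝ) * π * z / W)) *
          (Real.cos ((p : ℝ) * π * (yi + (Ai / wi) / 2) / H) -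
            Real.cos ((p : ℝ) * π * (yi - (Ai / wi) / 2) / H)))
      = ∑ p ∈ Finset.Icc 1 K,
        (a u p * ∫ z in (xi - wi / 2)..(xi + wi / 2), Real.cos ((u : ℝ) * π * z / W)) *
          (Real.cos ((p : ℝ) * π * (yi + (Ai / wi) / 2) / H) -
            Real.cos ((p : ℝ) * π * (yi - (Ai / wi) / 2) / H)) := by
    intro u _
    rw [sum_range_split, hD0, mul_zero, zero_add]
  rw [Finset.sum_congr rfl hrest]
  have hmain : ∀ u ∈ Finset.Icc 1 K,
      (∑ p ∈ Finset.Icc 1 K,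
        (a u p * ∫ z in (xi - wi / 2)..(xi + wi / 2), Real.cos ((u : ℝ) * π * z / W)) *
          (Real.cos ((p : ℝ) * π * (yi + (Ai / wi) / 2) / H) -
            Real.cos ((p : ℝ) * π * (yi - (Ai / wi) / 2) / H)))
      = ∑ p ∈ Finset.Icc 1 K,
          a u p * (W / ((u : ℝ) * π)) *
            (Real.sin ((u : ℝ) * π * (xi + wi / 2) / W) -
              Real.sin ((u : ℝ) * π * (xi - wi / 2) / W)) *
            (Real.cos ((p : ℝ) * π * (yi + (Ai / wi) / 2) / H) -
              Real.cos ((p : ℝ) * π * (yi - (Ai / wi) / 2) / H)) := by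
    intro u hu
    have hu1 : 1 ≤ u := (Finset.mem_Icc.mp hu).1
    have hupos : (0:ℝ) < (u:ℝ) := by exact_mod_cast hu1
    have hc : ((u : ℝ) * π) ≠ 0 := mul_ne_zero hupos.ne' Real.pi_ne_zero
    rw [integral_cos_div ((u : ℝ) * π) W hc hW.ne']
    refine Finset.sum_congr rfl fun p _ => ?_
    ring
  rw [Finset.sum_congr rfl hmain]
  ring
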